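/- Let 0 < c < e and set p = c/n. Let (G_1,…,G_n) be a tuple of n independent random graphs on a common vertex set of size n, each sampled from G(n,p), and let χ:[n]→[n] be any fixed bijection. Then the probability that (G_1,…,G_n) contains a χ-colored Hamilton cycle tends to 0 as n → ∞; in particular, with probability tending to 1, the tuple (G_1,…,G_n) is not rainbow Hamilton-universal. -/

import Mathlib

open MeasureTheory Filter
open scoped ENNReal Topology

/-- The Bernoulli measure on `Bool` with success probability `p` (a real number,
clamped into `[0,1]`; for `p ∈ [0,1]` this is the genuine Bernoulli measure). -/
noncomputable def bernoulliMeasure (p : ℝ) : Measure Bool :=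
  (PMF.bernoulli (min (Real.toNNReal p) 1) (min_le_right _ _)).toMeasure

/-- The Erdős–Rényi measure `G(n,p)`. -/
noncomputable def erMeasure (n : ℕ) (p : ℝ) : Measure (Sym2 (Fin n) → Bool) :=
  Measure.pi fun _ => bernoulliMeasure p

/-- The product measure for an `ι`-indexed tuple of independent samples from `G(n,p)`. -/
noncomputable def erTupleMeasure (ι : Type*) [Fintype ι] (n : ℕ) (p : ℝ) :
    Measure (ι → Sym2 (Fin n) → Bool) :=
  Measure.pi fun _ => erMeasure n p

/-- The simple graph on `Fin n` determined by an outcome `f : Sym2 (Fin n) → Bool`. -/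
def graphOf {n : ℕ} (f : Sym2 (Fin n) → Bool) : SimpleGraph (Fin n) :=
  SimpleGraph.fromEdgeSet {e | f e = true}

/-- `(G_1, …, G_n)` has a `χ`-colored Hamilton cycle. -/
def HasChiHamCycle (n : ℕ) (G : Fin n → SimpleGraph (Fin n)) (χ : Fin n → Fin n) : Prop :=
  3 ≤ n ∧ ∃ v : Fin n ≃ Fin n, ∀ i : Fin n, (G (χ i)).Adj (v i) (v (finRotate n i))

/-- `(G_1, …, G_n)` is rainbow Hamilton-universal if it has a `χ`-colored Hamilton
cycle for every bijection `χ : [n] → [n]`. -/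
def RainbowHamUniversal (n : ℕ) (G : Fin n → SimpleGraph (Fin n)) : Prop :=
  ∀ χ : Fin n ≃ Fin n, HasChiHamCycle n G ⇑χ

instance (p : ℝ) : IsProbabilityMeasure (bernoulliMeasure p) := by
  unfold bernoulliMeasure; infer_instance

instance (n : ℕ) (p : ℝ) : IsProbabilityMeasure (erMeasure n p) := by
  unfold erMeasure; infer_instance

lemma bern_true (p : ℝ) : bernoulliMeasure p {true} = ((min (Real.toNNReal p) 1 : NNReal) : ℝ≥0∞) := by
  unfold bernoulliMeasure
  rw [PMF.toMeasure_apply_singleton _ _ (measurableSet_singleton _)]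
  rfl

lemma er_cyl (n : ℕ) (p : ℝ) (e : Sym2 (Fin n)) :
    erMeasure n p {g | g e = true} ≤ ENNReal.ofReal p := by
  have hset : {g : Sym2 (Fin n) → Bool | g e = true}
      = Set.pi Set.univ (fun e' => if e' = e then {true} else Set.univ) := by
    ext g
    simp only [Set.mem_setOf_eq, Set.mem_pi, Set.mem_univ, forall_true_left]
    constructor
    · intro h e'; by_cases he : e' = e <;> simp [he, h]
    · intro h; simpa using h e
  rw [erMeasure, hset, Measure.pi_pi]
  have h1 : ∀ e' : Sym2 (Fin n), bernoulliMeasure p (if e' = e then {true} else Set.univ)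
      = if e' = e then ((min (Real.toNNReal p) 1 : NNReal) : ℝ≥0∞) else 1 := by
    intro e'; split
    · exact bern_true p
    · exact measure_univ
  simp only [h1, Finset.prod_ite_eq', Finset.mem_univ, if_true]
  exact ENNReal.coe_le_coe.2 (min_le_left _ _)

lemma event_le (n : ℕ) (p : ℝ) (χ : Fin n ≃ Fin n) :
    erTupleMeasure (Fin n) n p {ω | HasChiHamCycle n (fun i => graphOf (ω i)) ⇑χ}
      ≤ (n.factorial : ℝ≥0∞) * (ENNReal.ofReal p) ^ n := by
  set A : (Fin n ≃ Fin n) → Set (Fin n → Sym2 (Fin n) → Bool) :=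
    fun v => Set.pi Set.univ
      (fun j => {g | g (s(v (χ.symm j), v (finRotate n (χ.symm j)))) = true}) with hA
  have hsub : {ω | HasChiHamCycle n (fun i => graphOf (ω i)) ⇑χ} ⊆ ⋃ v, A v := by
    rintro ω ⟨-, v, hv⟩
    refine Set.mem_iUnion.2 ⟨v, ?_⟩
    intro j _
    have h := hv (χ.symm j)
    rw [Equiv.apply_symm_apply] at h
    exact ((SimpleGraph.fromEdgeSet_adj _).1 h).1
  have hAv : ∀ v, erTupleMeasure (Fin n) n p (A v) ≤ (ENNReal.ofReal p) ^ n := by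
    intro v
    rw [hA, erTupleMeasure, Measure.pi_pi]
    calc ∏ j : Fin n, erMeasure n p
          {g | g (s(v (χ.symm j), v (finRotate n (χ.symm j)))) = true}
        ≤ ∏ _j : Fin n, ENNReal.ofReal p :=
          Finset.prod_le_prod' fun j _ => er_cyl n p _
      _ = (ENNReal.ofReal p) ^ n := by simp
  calc erTupleMeasure (Fin n) n p {ω | HasChiHamCycle n (fun i => graphOf (ω i)) ⇑χ}
      ≤ erTupleMeasure (Fin n) n p (⋃ v, A v) := measure_mono hsub
    _ ≤ ∑' v : Fin n ≃ Fin n, erTupleMeasure (Fin n) n p (A v) := measure_iUnion_le _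
    _ ≤ ∑' _v : Fin n ≃ Fin n, (ENNReal.ofReal p) ^ n := ENNReal.tsum_le_tsum hAv
    _ = (n.factorial : ℝ≥0∞) * (ENNReal.ofReal p) ^ n := by
        rw [tsum_fintype, Finset.sum_const, nsmul_eq_mul]
        congr 1
        simp [Fintype.card_equiv (Equiv.refl (Fin n))]

lemma tendsto_aux (c : ℝ) (hc0 : 0 < c) (hce : c < Real.exp 1) :
    Tendsto (fun n : ℕ => (n.factorial : ℝ) * (c / n) ^ n) atTop (𝓝 0) := by
  set f : ℕ → ℝ := fun n => (n.factorial : ℝ) * (c / n) ^ n with hf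
  have hfpos : ∀ n : ℕ, 1 ≤ n → 0 < f n := by
    intro n hn
    have hN : (0:ℝ) < n := by exact_mod_cast hn
    exact mul_pos (by exact_mod_cast n.factorial_pos) (pow_pos (div_pos hc0 hN) n)
  have key : ∀ n : ℕ, 1 ≤ n → ‖f (n + 1)‖ / ‖f n‖ = c / ((1 + 1 / (n:ℝ)) ^ n) := by
    intro n hn
    have hN : (0:ℝ) < n := by exact_mod_cast hn
    have hN0 : (n:ℝ) ≠ 0 := ne_of_gt hN
    have hN1 : (n:ℝ) + 1 ≠ 0 := by positivity
    have hfact : (n.factorial : ℝ) ≠ 0 := by exact_mod_cast n.factorial_ne_zero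
    have hc : c ≠ 0 := ne_of_gt hc0
    rw [Real.norm_of_nonneg (hfpos (n+1) (by omega)).le, Real.norm_of_nonneg (hfpos n hn).le]
    have h1 : ((n+1).factorial : ℝ) = ((n:ℝ) + 1) * n.factorial := by
      push_cast [Nat.factorial_succ]; ring
    simp only [hf, h1]
    push_cast
    rw [div_eq_div_iff]
    · rw [show (1:ℝ) + 1 / (n:ℝ) = ((n:ℝ) + 1) / n by field_simp, div_pow, div_pow, div_pow,
        pow_succ]
      field_simp
      ring
    · exact ne_of_gt (mul_pos (by exact_mod_cast n.factorial_pos) (pow_pos (div_pos hc0 hN) n))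
    · have : (0:ℝ) < 1 + 1 / (n:ℝ) := by positivity
      exact ne_of_gt (pow_pos this n)
  have hrat : Tendsto (fun n : ℕ => ‖f (n + 1)‖ / ‖f n‖) atTop (𝓝 (c / Real.exp 1)) := by
    have hg : Tendsto (fun n : ℕ => c / ((1 + 1 / (n:ℝ)) ^ n)) atTop (𝓝 (c / Real.exp 1)) :=
      tendsto_const_nhds.div (Real.tendsto_one_add_div_pow_exp 1) (Real.exp_ne_zero 1)
    refine hg.congr' ?_
    filter_upwards [eventually_ge_atTop 1] with n hn
    exact (key n hn).symm
  have hne : ∀ᶠ n in atTop, f n ≠ 0 := by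
    filter_upwards [eventually_ge_atTop 1] with n hn
    exact ne_of_gt (hfpos n hn)
  exact (summable_of_ratio_test_tendsto_lt_one
    ((div_lt_one (Real.exp_pos 1)).2 hce) hne hrat).tendsto_atTop_zero

theorem statement_13 (c : ℝ) (hc0 : 0 < c) (hce : c < Real.exp 1)
    (χ : (n : ℕ) → Fin n ≃ Fin n) :
    Tendsto
      (fun n => erTupleMeasure (Fin n) n (c / n)
        {ω | HasChiHamCycle n (fun i => graphOf (ω i)) ⇑(χ n)})
      atTop (nhds 0) ∧
    Tendsto
      (fun n => erTupleMeasure (Fin n) n (c / n)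
        {ω | RainbowHamUniversal n fun i => graphOf (ω i)})
      atTop (nhds 0) := by
  have hbound : ∀ n : ℕ, erTupleMeasure (Fin n) n (c / n)
      {ω | HasChiHamCycle n (fun i => graphOf (ω i)) ⇑(χ n)}
      ≤ ENNReal.ofReal ((n.factorial : ℝ) * (c / n) ^ n) := by
    intro n
    have hp : (0:ℝ) ≤ c / n := div_nonneg hc0.le (Nat.cast_nonneg n)
    refine le_trans (event_le n (c / n) (χ n)) ?_
    rw [ENNReal.ofReal_mul (by positivity), ENNReal.ofReal_pow hp, ENNReal.ofReal_natCast]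
  have h1 : Tendsto (fun n : ℕ => ENNReal.ofReal ((n.factorial : ℝ) * (c / n) ^ n))
      atTop (𝓝 0) := by
    rw [← ENNReal.ofReal_zero]
    exact ENNReal.tendsto_ofReal (tendsto_aux c hc0 hce)
  have hfirst : Tendsto
      (fun n => erTupleMeasure (Fin n) n (c / n)
        {ω | HasChiHamCycle n (fun i => graphOf (ω i)) ⇑(χ n)})
      atTop (nhds 0) :=
    tendsto_of_tendsto_of_tendsto_of_le_of_le tendsto_const_nhds h1
      (fun n => zero_le) hbound
  refine ⟨hfirst, ?_⟩
  have hsub : ∀ n : ℕ, erTupleMeasure (Fin n) n (c / n)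
      {ω | RainbowHamUniversal n fun i => graphOf (ω i)}
      ≤ erTupleMeasure (Fin n) n (c / n)
        {ω | HasChiHamCycle n (fun i => graphOf (ω i)) ⇑(χ n)} := by
    intro n
    exact measure_mono fun ω hω => hω (χ n)
  exact tendsto_of_tendsto_of_tendsto_of_le_of_le tendsto_const_nhds hfirst
    (fun n => zero_le) hsub
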